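/- Let {X, φ_i} be a fundamental limit space for the CIS {X_i, Y_i, f_i}. If X is compact, then each X_i is compact. -/

import Mathlib

universe u v w

/-- A closed injective system (CIS): nonempty topological spaces `X i`, closed subspaces
`Y i ⊆ X i`, and closed injective continuous maps `f i : Y i → X (i+1)`, modeled as total
maps `f i : X i → X (i+1)` whose relevant properties are only required on `Y i`. -/
structure CIS where
  X : ℕ → Type u
  topX : ∀ i, TopologicalSpace (X i)
  nonemptyX : ∀ i, Nonempty (X i)
  Y : ∀ i, Set (X i)
  closedY : ∀ i, IsClosed (Y i)
  f : ∀ i, X i → X (i + 1)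
  f_contOn : ∀ i, ContinuousOn (f i) (Y i)
  f_injOn : ∀ i, Set.InjOn (f i) (Y i)
  f_closedOn : ∀ i (C : Set (X i)), IsClosed C → C ⊆ Y i → IsClosed (f i '' C)

instance (S : CIS) (i : ℕ) : TopologicalSpace (S.X i) := S.topX i

/-- The iterated composition `f_{j-1} ∘ ⋯ ∘ f_i : X i → X j` (total extension of `f_{i,j-1}`). -/
def CIS.T (S : CIS) {i j : ℕ} (h : i ≤ j) (x : S.X i) : S.X j :=
  Nat.leRecOn h (fun {k} y => S.f k y) x

/-- The set `Y_{i,j}` (domain of `f_{i,j}`): points of `Y i` whose iterated images remain in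
the sets `Y k` for all `i ≤ k ≤ j`. -/
def CIS.YY (S : CIS) (i j : ℕ) : Set (S.X i) :=
  {x | ∀ k, ∀ h : i ≤ k, k ≤ j → S.T h x ∈ S.Y k}

/-- `f i` and `f j` are semicomponible (`i ≤ j`): every map is semicomponible with itself,
and for `i < j` semicomponibility means that the domain `Y_{i,j}` is nonempty. -/
def CIS.Semicomp (S : CIS) (i j : ℕ) : Prop :=
  i = j ∨ (i < j ∧ (S.YY i j).Nonempty)

/-- A limit space `{L, φ}` for a CIS. -/
structure IsLimitSpace (S : CIS) (L : Type v) [TopologicalSpace L]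
    (φ : ∀ i, S.X i → L) : Prop where
  covers : ⋃ i, Set.range (φ i) = Set.univ
  embedding : ∀ i, Topology.IsEmbedding (φ i)
  l3 : ∀ i j, ∀ hij : i < j, S.Semicomp i j →
    Set.range (φ i) ∩ Set.range (φ j) = φ j '' (S.T hij.le '' S.YY i (j - 1))
  l3' : ∀ i j, ∀ hij : i < j, S.Semicomp i j → ∀ (xi : S.X i) (xj : S.X j),
    φ i xi = φ j xj → xi ∈ S.YY i (j - 1) ∧ xj = S.T hij.le xi
  l4 : ∀ i j, i < j → ¬ S.Semicomp i j → Set.range (φ i) ∩ Set.range (φ j) = ∅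

/-- A fundamental limit space: a limit space whose topology is the weak topology
induced by the maps `φ i`. -/
structure IsFundamentalLimitSpace (S : CIS) (L : Type v) [TopologicalSpace L]
    (φ : ∀ i, S.X i → L) extends IsLimitSpace S L φ : Prop where
  weakTopology : ∀ A : Set L, IsClosed A ↔ ∀ i, IsClosed (φ i ⁻¹' A)

/-- A cis-morphism between closed injective systems. -/
structure CISMorphism (S S' : CIS) where
  h : ∀ i, S.X i → S'.X i
  cont : ∀ i, Continuous (h i)
  closedMap : ∀ i, IsClosedMap (h i)
  mapsY : ∀ i, h i '' S.Y i ⊆ S'.Y i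
  comm : ∀ i, ∀ y ∈ S.Y i, h (i + 1) (S.f i y) = S'.f i (h i y)

/-- A cis-isomorphism: each `h i` is a homeomorphism carrying `Y i` onto `Y' i`. -/
def CISMorphism.IsIso {S S' : CIS} (m : CISMorphism S S') : Prop :=
  ∀ i, Function.Bijective (m.h i) ∧ m.h i '' S.Y i = S'.Y i

/-- The generating relation identifying each `y ∈ Y i` with `f i y ∈ X (i+1)`. -/
def CIS.Rel0 (S : CIS) (a b : Σ i, S.X i) : Prop :=
  a.2 ∈ S.Y a.1 ∧ b = ⟨a.1 + 1, S.f a.1 a.2⟩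

/-- The relation `~` on the coproduct `⨿ X i` for an inductive CIS:
`⟨i, x⟩ ~ ⟨j, y⟩` iff `y = f_i^j x` when `i ≤ j`, and `x = f_j^i y` when `j < i`. -/
def CIS.IndRel (S : CIS) (a b : Σ i, S.X i) : Prop :=
  (∀ h : a.1 ≤ b.1, S.T h a.2 = b.2) ∧ (∀ h : b.1 < a.1, S.T h.le b.2 = a.2)

/-- A CIS is finitely semicomponible if for each `i` only finitely many `j` are such that
`f i, f j` (or `f j, f i`) are semicomponible. -/
def CIS.FinitelySemicomp (S : CIS) : Prop :=
  ∀ i, {j | S.Semicomp i j ∨ S.Semicomp j i}.Finite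

section Aux

variable (S : CIS)

lemma CIS.T_self {i : ℕ} (h : i ≤ i) (x : S.X i) : S.T h x = x := Nat.leRecOn_self x

lemma CIS.T_succ {i m : ℕ} (hm : i ≤ m) (h : i ≤ m + 1) (x : S.X i) :
    S.T h x = S.f m (S.T hm x) := Nat.leRecOn_succ hm x

lemma CIS.YY_antitone {i m n : ℕ} (hmn : m ≤ n) : S.YY i n ⊆ S.YY i m :=
  fun x hx k hk1 hk2 => hx k hk1 (hk2.trans hmn)

lemma CIS.YY_self (i : ℕ) : S.YY i i = S.Y i := by
  ext x
  constructor
  · intro hx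
    have := hx i le_rfl le_rfl
    rwa [S.T_self le_rfl x] at this
  · intro hx k hk1 hk2
    have hk : k = i := le_antisymm hk2 hk1
    subst hk
    rwa [S.T_self hk1 x]

lemma CIS.mem_YY_succ {i m : ℕ} (hm : i ≤ m) (x : S.X i) :
    x ∈ S.YY i (m + 1) ↔ x ∈ S.YY i m ∧ S.f m (S.T hm x) ∈ S.Y (m + 1) := by
  constructor
  · intro hx
    refine ⟨S.YY_antitone (Nat.le_succ m) hx, ?_⟩
    have := hx (m + 1) (hm.trans (Nat.le_succ m)) le_rfl
    rwa [S.T_succ hm _ x] at this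
  · rintro ⟨hx, hfx⟩ k hk1 hk2
    rcases Nat.lt_or_ge k (m + 1) with hk | hk
    · exact hx k hk1 (Nat.lt_succ_iff.mp hk)
    · have hkm : k = m + 1 := le_antisymm hk2 hk
      subst hkm
      rwa [S.T_succ hm hk1 x]

/-- Packaged induction: closedness of `YY`, continuity/injectivity of `T` on `YY`,
and closedness of the image `T '' YY` inside `Y m`. -/
lemma CIS.pack (i : ℕ) : ∀ m (h : i ≤ m),
    IsClosed (S.YY i m) ∧ ContinuousOn (S.T h) (S.YY i m) ∧
    Set.InjOn (S.T h) (S.YY i m) ∧ IsClosed (S.T h '' S.YY i m) ∧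
    S.T h '' S.YY i m ⊆ S.Y m := by
  refine Nat.le_induction ?_ ?_
  · have hid : S.T (le_refl i) = id := funext fun x => S.T_self _ x
    rw [S.YY_self i, hid]
    simp only [Set.image_id, Set.image_id', id]
    exact ⟨S.closedY i, continuousOn_id, Set.injOn_id _, S.closedY i, le_rfl⟩
  · intro m hm IH
    obtain ⟨hcl, hcont, hinj, hclim, hsub⟩ := IH
    have hsub' : ∀ x ∈ S.YY i m, S.T hm x ∈ S.Y m := fun x hx =>
      hsub (Set.mem_image_of_mem _ hx)
    have hmono : S.YY i (m + 1) ⊆ S.YY i m := S.YY_antitone (Nat.le_succ m)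
    have hTsucc : ∀ x, S.T (hm.trans (Nat.le_succ m)) x = S.f m (S.T hm x) :=
      fun x => S.T_succ hm _ x
    -- the composed map is continuous on YY i m
    have hcomp : ContinuousOn (fun x => S.f m (S.T hm x)) (S.YY i m) :=
      (S.f_contOn m).comp hcont hsub'
    have hYYeq : S.YY i (m + 1) = S.YY i m ∩ (fun x => S.f m (S.T hm x)) ⁻¹' S.Y (m + 1) := by
      ext x
      rw [S.mem_YY_succ hm x]
      rfl
    have hclYY : IsClosed (S.YY i (m + 1)) := by
      rw [hYYeq]
      exact hcomp.preimage_isClosed_of_isClosed hcl (S.closedY (m + 1))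
    have himeq : S.T hm '' S.YY i (m + 1) = (S.T hm '' S.YY i m) ∩ S.f m ⁻¹' S.Y (m + 1) := by
      ext b
      constructor
      · rintro ⟨x, hx, rfl⟩
        exact ⟨Set.mem_image_of_mem _ (hmono hx), ((S.mem_YY_succ hm x).mp hx).2⟩
      · rintro ⟨⟨x, hx, rfl⟩, hb⟩
        exact Set.mem_image_of_mem _ ((S.mem_YY_succ hm x).mpr ⟨hx, hb⟩)
    have himeq2 : S.T (hm.trans (Nat.le_succ m)) '' S.YY i (m + 1)
        = (S.f m '' (S.T hm '' S.YY i m)) ∩ S.Y (m + 1) := by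
      rw [← Set.image_inter_preimage, ← himeq]
      ext b
      constructor
      · rintro ⟨x, hx, rfl⟩
        exact ⟨S.T hm x, Set.mem_image_of_mem _ hx, (hTsucc x).symm⟩
      · rintro ⟨c, ⟨x, hx, rfl⟩, rfl⟩
        exact ⟨x, hx, hTsucc x⟩
    refine ⟨hclYY, ?_, ?_, ?_, ?_⟩
    · -- continuity
      have : ContinuousOn (fun x => S.f m (S.T hm x)) (S.YY i (m + 1)) := hcomp.mono hmono
      exact this.congr fun x _ => hTsucc x
    · -- injectivity
      intro x hx y hy hxy
      rw [hTsucc x, hTsucc y] at hxy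
      have := S.f_injOn m (hsub' x (hmono hx)) (hsub' y (hmono hy)) hxy
      exact hinj (hmono hx) (hmono hy) this
    · rw [himeq2]
      exact (S.f_closedOn m _ hclim hsub).inter (S.closedY (m + 1))
    · rw [himeq2]
      exact Set.inter_subset_right

lemma CIS.closed_YY {i m : ℕ} : IsClosed (S.YY i m) := by
  rcases le_or_gt i m with h | h
  · exact (S.pack i m h).1
  · have : S.YY i m = Set.univ := by
      ext x
      simp only [Set.mem_univ, iff_true]
      intro k hk1 hk2
      omega
    rw [this]; exact isClosed_univ

/-- One step beyond: for `i < j`, the image `T (i ≤ j) '' YY i (j-1)` is closed,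
and `T (i ≤ j)` is injective on `YY i (j-1)`. -/
lemma CIS.step {i j : ℕ} (hij : i < j) (hi : i ≤ j - 1) :
    IsClosed (S.T hij.le '' S.YY i (j - 1)) ∧ Set.InjOn (S.T hij.le) (S.YY i (j - 1)) := by
  obtain ⟨m, rfl⟩ : ∃ m, j = m + 1 := ⟨j - 1, by omega⟩
  have hm : i ≤ m := by omega
  simp only [Nat.add_sub_cancel] at *
  obtain ⟨_, _, hinj, hclim, hsub⟩ := S.pack i m hm
  have hsub' : ∀ x ∈ S.YY i m, S.T hm x ∈ S.Y m := fun x hx =>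
    hsub (Set.mem_image_of_mem _ hx)
  have hTsucc : ∀ x, S.T hij.le x = S.f m (S.T hm x) := fun x => S.T_succ hm _ x
  constructor
  · have : S.T hij.le '' S.YY i m = S.f m '' (S.T hm '' S.YY i m) := by
      rw [← Set.image_comp]
      exact Set.image_congr fun x _ => hTsucc x
    rw [this]
    exact S.f_closedOn m _ hclim hsub
  · intro x hx y hy hxy
    rw [hTsucc x, hTsucc y] at hxy
    exact hinj hx hy (S.f_injOn m (hsub' x hx) (hsub' y hy) hxy)

/-- Commutativity: on `YY i (j-1)` we have `φ i = φ j ∘ T`. -/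
lemma CIS.comm {S : CIS} {L : Type v} [TopologicalSpace L] {φ : ∀ i, S.X i → L}
    (hL : IsLimitSpace S L φ) {i j : ℕ} (hij : i < j) (sc : S.Semicomp i j)
    {x : S.X i} (hx : x ∈ S.YY i (j - 1)) : φ i x = φ j (S.T hij.le x) := by
  have hi : i ≤ j - 1 := by omega
  have hmem : φ j (S.T hij.le x) ∈ Set.range (φ i) ∩ Set.range (φ j) := by
    rw [hL.l3 i j hij sc]
    exact Set.mem_image_of_mem _ (Set.mem_image_of_mem _ hx)
  obtain ⟨⟨x', hx'⟩, -⟩ := hmem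
  obtain ⟨hx'mem, hTeq⟩ := hL.l3' i j hij sc x' (S.T hij.le x) hx'
  have hxx : x' = x := (S.step hij hi).2 hx'mem hx hTeq.symm
  rw [← hx', hxx]

end Aux

theorem stmt8 (S : CIS) (L : Type v) [TopologicalSpace L] (φ : ∀ i, S.X i → L)
    (hL : IsFundamentalLimitSpace S L φ) (hc : CompactSpace L) :
    ∀ i, CompactSpace (S.X i) := by
  intro i
  have hclosed : IsClosed (Set.range (φ i)) := by
    rw [hL.weakTopology]
    intro j
    rcases lt_trichotomy i j with hij | rfl | hji
    · by_cases sc : S.Semicomp i j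
      · have heq : φ j ⁻¹' Set.range (φ i) = S.T hij.le '' S.YY i (j - 1) := by
          ext x
          simp only [Set.mem_preimage, Set.mem_range]
          constructor
          · rintro ⟨c, hc⟩
            obtain ⟨h1, h2⟩ := hL.l3' i j hij sc c x hc
            exact ⟨c, h1, h2.symm⟩
          · rintro ⟨c, hc, rfl⟩
            exact ⟨c, CIS.comm hL.toIsLimitSpace hij sc hc⟩
        rw [heq]
        exact (S.step hij (by omega)).1
      · have hdisj := hL.l4 i j hij sc
        have : φ j ⁻¹' Set.range (φ i) = ∅ := by
          ext x
          simp only [Set.mem_preimage, Set.mem_empty_iff_false, iff_false]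
          intro hx
          have : φ j x ∈ Set.range (φ i) ∩ Set.range (φ j) := ⟨hx, Set.mem_range_self x⟩
          rw [hdisj] at this
          exact this
        rw [this]; exact isClosed_empty
    · rw [Set.preimage_range]; exact isClosed_univ
    · by_cases sc : S.Semicomp j i
      · have heq : φ j ⁻¹' Set.range (φ i) = S.YY j (i - 1) := by
          ext x
          simp only [Set.mem_preimage, Set.mem_range]
          constructor
          · rintro ⟨c, hc⟩
            exact (hL.l3' j i hji sc x c hc.symm).1
          · intro hx
            exact ⟨S.T hji.le x, (CIS.comm hL.toIsLimitSpace hji sc hx).symm⟩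
        rw [heq]
        exact S.closed_YY
      · have hdisj := hL.l4 j i hji sc
        have : φ j ⁻¹' Set.range (φ i) = ∅ := by
          ext x
          simp only [Set.mem_preimage, Set.mem_empty_iff_false, iff_false]
          intro hx
          have : φ j x ∈ Set.range (φ j) ∩ Set.range (φ i) := ⟨Set.mem_range_self x, hx⟩
          rw [hdisj] at this
          exact this
        rw [this]; exact isClosed_empty
  have hcomp : IsCompact (Set.range (φ i)) := hclosed.isCompact
  have : IsCompact (Set.univ : Set (S.X i)) := by
    rw [(hL.embedding i).isCompact_iff]
    simpa using hcomp
  exact ⟨this⟩
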